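/- arXiv:2406.16404 — 4 statements merged into one kernel-verified Lean document; each statement's English description precedes it below -/
import Mathlib

section
/- The number of 3-compositions of n, for n ≥ 1, equals 4^(n-1). -/
/-- A 3-composition of `n`: a list of colored parts (part, color), each part positive,
parts summing to `n`, and the last part has the first color `0`. -/
def Is3Composition (n : ℕ) (l : List (ℕ × Fin 3)) : Prop :=
  (∀ p ∈ l, 0 < p.1) ∧ (l.map Prod.fst).sum = n ∧
    ∀ p, l.getLast? = some p → p.2 = 0

namespace ThreeComp

/-- Decode a word over `Fin 4` into a 3-composition of `w.length + 1`. -/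
def dec : List (Fin 4) → List (ℕ × Fin 3)
  | [] => [(1, 0)]
  | x :: w =>
    if h : (x : ℕ) < 3 then (1, ⟨x, h⟩) :: dec w
    else ((dec w).headI.1 + 1, (dec w).headI.2) :: (dec w).tail

/-- Encode a 3-composition as a word over `Fin 4`. -/
def enc : List (ℕ × Fin 3) → List (Fin 4)
  | [] => []
  | (p, c) :: rest =>
    List.replicate (p - 1) (3 : Fin 4) ++
      (if rest = [] then [] else [c.castSucc]) ++ enc rest

theorem dec_ne_nil (w : List (Fin 4)) : dec w ≠ [] := by
  cases w with
  | nil => simp [dec]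
  | cons x w => rw [dec]; split <;> simp

theorem dec_pos (w : List (Fin 4)) : ∀ p ∈ dec w, 0 < p.1 := by
  induction w with
  | nil => simp [dec]
  | cons x w ih =>
    rw [dec]
    split
    · simpa using ih
    · obtain ⟨a, t, ht⟩ := List.exists_cons_of_ne_nil (dec_ne_nil w)
      rw [ht]
      intro p hp
      rw [List.mem_cons] at hp
      rcases hp with rfl | h
      · simp
      · exact ih p (ht ▸ List.mem_cons_of_mem a h)

theorem dec_sum (w : List (Fin 4)) : ((dec w).map Prod.fst).sum = w.length + 1 := by
  induction w with
  | nil => simp [dec]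
  | cons x w ih =>
    rw [dec]
    split
    · simp only [List.map_cons, List.sum_cons, List.length_cons]
      omega
    · obtain ⟨a, t, ht⟩ := List.exists_cons_of_ne_nil (dec_ne_nil w)
      rw [ht]
      rw [ht] at ih
      simp only [List.map_cons, List.sum_cons, List.headI_cons, List.tail_cons,
        List.length_cons] at *
      omega

theorem dec_last (w : List (Fin 4)) : ∀ q, (dec w).getLast? = some q → q.2 = 0 := by
  induction w with
  | nil => intro q hq; simp [dec] at hq; rw [← hq]
  | cons x w ih =>
    intro q hq
    rw [dec] at hq
    obtain ⟨a, t, ht⟩ := List.exists_cons_of_ne_nil (dec_ne_nil w)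
    split at hq
    · rw [ht, List.getLast?_cons_cons] at hq
      exact ih q (ht ▸ hq)
    · rw [ht] at hq
      simp only [List.headI_cons, List.tail_cons] at hq
      cases t with
      | nil =>
        simp at hq
        have := ih a (by rw [ht]; rfl)
        rw [← hq]
        exact this
      | cons b t' =>
        rw [List.getLast?_cons_cons] at hq
        exact ih q (by rw [ht, List.getLast?_cons_cons]; exact hq)

theorem enc_dec (w : List (Fin 4)) : enc (dec w) = w := by
  induction w with
  | nil => simp [dec, enc]
  | cons x w ih =>
    rw [dec]
    split
    · rename_i h
      rw [enc, if_neg (dec_ne_nil w), ih]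
      simp [Fin.ext_iff]
    · rename_i h
      obtain ⟨⟨p, c⟩, t, ht⟩ := List.exists_cons_of_ne_nil (dec_ne_nil w)
      have hp : 0 < p := dec_pos w (p, c) (by rw [ht]; exact List.mem_cons_self)
      rw [ht]
      simp only [List.headI_cons, List.tail_cons]
      rw [enc]
      rw [ht] at ih
      rw [enc] at ih
      have hx : x = 3 := by
        fin_cases x <;> simp_all
      have hrep : p + 1 - 1 = 1 + (p - 1) := by omega
      rw [hrep, List.replicate_add, List.replicate_one]
      rw [hx]
      simp only [List.cons_append, List.append_assoc] at *
      rw [ih]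
      rfl

theorem dec_replicate (k : ℕ) (w : List (Fin 4)) :
    dec (List.replicate k 3 ++ w) =
      ((dec w).headI.1 + k, (dec w).headI.2) :: (dec w).tail := by
  induction k with
  | zero =>
    obtain ⟨a, t, ht⟩ := List.exists_cons_of_ne_nil (dec_ne_nil w)
    simp [ht]
  | succ k ih =>
    rw [List.replicate_succ, List.cons_append, dec]
    rw [dif_neg (by decide)]
    rw [ih]
    simp only [List.headI_cons, List.tail_cons]
    rw [Nat.add_assoc]

theorem dec_enc (l : List (ℕ × Fin 3)) (hne : l ≠ [])
    (hpos : ∀ p ∈ l, 0 < p.1) (hlast : ∀ q, l.getLast? = some q → q.2 = 0) :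
    dec (enc l) = l := by
  induction l with
  | nil => exact absurd rfl hne
  | cons a rest ih =>
    obtain ⟨p, c⟩ := a
    have hp : 0 < p := hpos (p, c) (List.mem_cons_self)
    cases rest with
    | nil =>
      have hc : c = 0 := hlast (p, c) rfl
      subst hc
      have henc : enc [((p : ℕ), (0 : Fin 3))] = List.replicate (p - 1) 3 ++ [] := by
        simp [enc]
      rw [henc, dec_replicate]
      simp [dec]
      omega
    | cons b rest' =>
      rw [enc]
      have hrec : dec (enc (b :: rest')) = b :: rest' := by
        apply ih
        · simp
        · intro q hq; exact hpos q (List.mem_cons_of_mem _ hq)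
        · intro q hq
          exact hlast q (by rw [List.getLast?_cons_cons]; exact hq)
      rw [if_neg (List.cons_ne_nil b rest'), List.append_assoc, dec_replicate]
      have hd : dec ([c.castSucc] ++ enc (b :: rest')) = (1, c) :: (b :: rest') := by
        rw [List.singleton_append, dec, dif_pos (by simp)]
        rw [hrec]
        simp [Fin.ext_iff]
      rw [hd]
      simp only [List.headI_cons, List.tail_cons]
      have h1 : 1 + (p - 1) = p := by omega
      rw [h1]

theorem enc_length (l : List (ℕ × Fin 3)) (hne : l ≠ [])
    (hpos : ∀ p ∈ l, 0 < p.1) :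
    (enc l).length + 1 = (l.map Prod.fst).sum := by
  induction l with
  | nil => exact absurd rfl hne
  | cons a rest ih =>
    obtain ⟨p, c⟩ := a
    have hp : 0 < p := hpos (p, c) (List.mem_cons_self)
    rw [enc]
    cases rest with
    | nil => simp [enc]; omega
    | cons b rest' =>
      have hih := ih (by simp) (fun q hq => hpos q (List.mem_cons_of_mem _ hq))
      rw [if_neg (List.cons_ne_nil b rest')]
      simp only [List.length_append, List.length_replicate, List.length_cons,
        List.length_nil, List.map_cons, List.sum_cons]
      rw [List.map_cons, List.sum_cons] at hih
      omega

end ThreeComp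

theorem threeCompositions_card (n : ℕ) (hn : 1 ≤ n) :
    Nat.card {l : List (ℕ × Fin 3) // Is3Composition n l} = 4 ^ (n - 1) := by
  have e : {l : List (ℕ × Fin 3) // Is3Composition n l} ≃
      {w : List (Fin 4) // w.length = n - 1} := by
    refine ⟨fun l => ⟨ThreeComp.enc l.1, ?_⟩, fun w => ⟨ThreeComp.dec w.1, ?_⟩, ?_, ?_⟩
    · obtain ⟨l, hpos, hsum, hlast⟩ := l
      have hne : l ≠ [] := by
        rintro rfl; simp at hsum; omega
      have hlen := ThreeComp.enc_length l hne hpos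
      rw [hsum] at hlen
      show (ThreeComp.enc l).length = n - 1
      omega
    · obtain ⟨w, hw⟩ := w
      refine ⟨ThreeComp.dec_pos w, ?_, ThreeComp.dec_last w⟩
      rw [ThreeComp.dec_sum, hw]
      omega
    · rintro ⟨l, hpos, hsum, hlast⟩
      have hne : l ≠ [] := by
        rintro rfl; simp at hsum; omega
      exact Subtype.ext (ThreeComp.dec_enc l hne hpos hlast)
    · rintro ⟨w, hw⟩
      exact Subtype.ext (ThreeComp.enc_dec w)
  rw [Nat.card_congr e]
  have : {w : List (Fin 4) // w.length = n - 1} = List.Vector (Fin 4) (n - 1) := rfl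
  rw [this, Nat.card_eq_fintype_card, card_vector, Fintype.card_fin]
end

section
/- There is a bijection between 3-compositions of n and pairs of compositions of n, for n ≥ 1. -/
def IsComposition (n : ℕ) (l : List ℕ) : Prop :=
  (∀ x ∈ l, 0 < x) ∧ l.sum = n

/-- merge `a` onto the head of a list -/
def mg (a : ℕ) : List ℕ → List ℕ
  | [] => [a]
  | x :: xs => (a + x) :: xs

def fwd : List (ℕ × Fin 3) → List ℕ × List ℕ
  | [] => ([], [])
  | [(a, _)] => ([a], [a])
  | (a, c) :: x :: l =>
    let p := fwd (x :: l)
    if c = 0 then (a :: p.1, a :: p.2)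
    else if c = 1 then (a :: p.1, mg a p.2)
    else (mg a p.1, a :: p.2)

def bwd : List ℕ → List ℕ → List (ℕ × Fin 3)
  | [], _ => []
  | _ :: _, [] => []
  | a :: A, b :: B =>
    if a = b then (a, 0) :: bwd A B
    else if a < b then (a, 1) :: bwd A ((b - a) :: B)
    else (b, 2) :: bwd ((a - b) :: A) B
termination_by A B => A.length + B.length
decreasing_by all_goals (simp; try omega)

example : True := trivial

lemma mg_cons (a x : ℕ) (xs : List ℕ) : mg a (x :: xs) = (a + x) :: xs := rfl

lemma fwd_ne_nil1 (x : ℕ × Fin 3) (l : List (ℕ × Fin 3)) : (fwd (x :: l)).1 ≠ [] := by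
  match x, l with
  | (a, c), [] => simp [fwd]
  | (a, c), y :: l =>
    simp only [fwd]
    split_ifs <;> simp [mg]
    cases h : (fwd (y :: l)).1 <;> simp [mg]

lemma fwd_ne_nil2 (x : ℕ × Fin 3) (l : List (ℕ × Fin 3)) : (fwd (x :: l)).2 ≠ [] := by
  match x, l with
  | (a, c), [] => simp [fwd]
  | (a, c), y :: l =>
    simp only [fwd]
    split_ifs <;> simp [mg]
    cases h : (fwd (y :: l)).2 <;> simp [mg]

lemma fwd_cons0 (a : ℕ) (x : ℕ × Fin 3) (l : List (ℕ × Fin 3)) :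
    fwd ((a, 0) :: x :: l) = (a :: (fwd (x :: l)).1, a :: (fwd (x :: l)).2) := rfl

lemma fwd_cons1 (a : ℕ) (x : ℕ × Fin 3) (l : List (ℕ × Fin 3)) :
    fwd ((a, 1) :: x :: l) = (a :: (fwd (x :: l)).1, mg a (fwd (x :: l)).2) := rfl

lemma fwd_cons2 (a : ℕ) (x : ℕ × Fin 3) (l : List (ℕ × Fin 3)) :
    fwd ((a, 2) :: x :: l) = (mg a (fwd (x :: l)).1, a :: (fwd (x :: l)).2) := rfl

lemma eq_two_of_ne (c : Fin 3) (h0 : ¬c = 0) (h1 : ¬c = 1) : c = 2 := by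
  have v0 : c.val ≠ 0 := fun h => h0 (Fin.ext h)
  have v1 : c.val ≠ 1 := fun h => h1 (Fin.ext h)
  have := c.isLt
  exact Fin.ext (by omega)

lemma fwd_sum1 (l : List (ℕ × Fin 3)) : (fwd l).1.sum = (l.map Prod.fst).sum := by
  induction l using fwd.induct with
  | case1 => simp [fwd]
  | case2 a c => simp [fwd]
  | case3 a x l ih => simp [fwd_cons0, ih]
  | case4 a x l h ih => simp [fwd_cons1, ih]
  | case5 a c x l h0 h1 ih =>
    rw [eq_two_of_ne c h0 h1, fwd_cons2]
    cases h : (fwd (x :: l)).1 with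
    | nil => exact absurd h (fwd_ne_nil1 _ _)
    | cons y ys =>
      rw [h] at ih
      simp [mg] at ih ⊢
      omega

lemma fwd_sum2 (l : List (ℕ × Fin 3)) : (fwd l).2.sum = (l.map Prod.fst).sum := by
  induction l using fwd.induct with
  | case1 => simp [fwd]
  | case2 a c => simp [fwd]
  | case3 a x l ih => simp [fwd_cons0, ih]
  | case5 a c x l h0 h1 ih => rw [eq_two_of_ne c h0 h1]; simp [fwd_cons2, ih]
  | case4 a x l h ih =>
    rw [fwd_cons1]
    cases h : (fwd (x :: l)).2 with
    | nil => exact absurd h (fwd_ne_nil2 _ _)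
    | cons y ys =>
      rw [h] at ih
      simp [mg] at ih ⊢
      omega

lemma fwd_pos1 (l : List (ℕ × Fin 3)) (hl : ∀ p ∈ l, 0 < p.1) :
    ∀ x ∈ (fwd l).1, 0 < x := by
  induction l using fwd.induct with
  | case1 => simp [fwd]
  | case2 a c => simpa [fwd] using hl (a, c) (by simp)
  | case3 a x l ih =>
    have ih' := ih (fun p hp => hl p (by simp [hp]))
    have ha : 0 < a := hl (a, 0) (by simp)
    rw [fwd_cons0]
    intro z hz
    rcases List.mem_cons.1 hz with h | h
    · omega
    · exact ih' z h
  | case4 a x l h ih =>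
    have ih' := ih (fun p hp => hl p (by simp [hp]))
    have ha : 0 < a := hl (a, 1) (by simp)
    rw [fwd_cons1]
    intro z hz
    rcases List.mem_cons.1 hz with h | h
    · omega
    · exact ih' z h
  | case5 a c x l h0 h1 ih =>
    have ih' := ih (fun p hp => hl p (by simp [hp]))
    have ha : 0 < a := hl (a, c) (by simp)
    rw [eq_two_of_ne c h0 h1, fwd_cons2]
    cases h : (fwd (x :: l)).1 with
    | nil => exact absurd h (fwd_ne_nil1 _ _)
    | cons y ys =>
      rw [h] at ih'
      intro z hz
      rcases List.mem_cons.1 hz with h' | h'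
      · subst h'; simp [mg] at hz ⊢; omega
      · exact ih' z (by simp [h'])

lemma fwd_pos2 (l : List (ℕ × Fin 3)) (hl : ∀ p ∈ l, 0 < p.1) :
    ∀ x ∈ (fwd l).2, 0 < x := by
  induction l using fwd.induct with
  | case1 => simp [fwd]
  | case2 a c => simpa [fwd] using hl (a, c) (by simp)
  | case3 a x l ih =>
    have ih' := ih (fun p hp => hl p (by simp [hp]))
    have ha : 0 < a := hl (a, 0) (by simp)
    rw [fwd_cons0]
    intro z hz
    rcases List.mem_cons.1 hz with h | h
    · omega
    · exact ih' z h
  | case5 a c x l h0 h1 ih =>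
    have ih' := ih (fun p hp => hl p (by simp [hp]))
    have ha : 0 < a := hl (a, c) (by simp)
    rw [eq_two_of_ne c h0 h1, fwd_cons2]
    intro z hz
    rcases List.mem_cons.1 hz with h | h
    · omega
    · exact ih' z h
  | case4 a x l h ih =>
    have ih' := ih (fun p hp => hl p (by simp [hp]))
    have ha : 0 < a := hl (a, 1) (by simp)
    rw [fwd_cons1]
    cases h : (fwd (x :: l)).2 with
    | nil => exact absurd h (fwd_ne_nil2 _ _)
    | cons y ys =>
      rw [h] at ih'
      intro z hz
      rcases List.mem_cons.1 hz with h' | h'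
      · subst h'; simp [mg] at hz ⊢; omega
      · exact ih' z (by simp [h'])

lemma bwd_nil (B : List ℕ) : bwd [] B = [] := by cases B <;> simp [bwd]

lemma bwd_cons_eq (b : ℕ) (A B : List ℕ) : bwd (b :: A) (b :: B) = (b, 0) :: bwd A B := by
  simp [bwd]

lemma bwd_cons_lt (a b : ℕ) (A B : List ℕ) (h : a < b) :
    bwd (a :: A) (b :: B) = (a, 1) :: bwd A ((b - a) :: B) := by
  simp [bwd, Nat.ne_of_lt h, h]

lemma bwd_cons_gt (a b : ℕ) (A B : List ℕ) (h : b < a) :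
    bwd (a :: A) (b :: B) = (b, 2) :: bwd ((a - b) :: A) B := by
  simp [bwd, Nat.ne_of_gt h, Nat.not_lt.2 (Nat.le_of_lt h)]

lemma bwd_ne_nil (a b : ℕ) (A B : List ℕ) : bwd (a :: A) (b :: B) ≠ [] := by
  rcases Nat.lt_trichotomy a b with h | h | h
  · rw [bwd_cons_lt a b A B h]; simp
  · subst h; rw [bwd_cons_eq]; simp
  · rw [bwd_cons_gt a b A B h]; simp

lemma bwd_pos (A B : List ℕ) (hA : ∀ x ∈ A, 0 < x) (hB : ∀ x ∈ B, 0 < x) :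
    ∀ p ∈ bwd A B, 0 < p.1 := by
  induction A, B using bwd.induct with
  | case1 B => simp [bwd_nil]
  | case2 a A => simp [bwd]
  | case3 A b B ih =>
    rw [bwd_cons_eq]
    intro p hp
    rcases List.mem_cons.1 hp with h | h
    · subst h; exact hB b (by simp)
    · exact ih (fun x hx => hA x (by simp [hx])) (fun x hx => hB x (by simp [hx])) p h
  | case4 a A b B hne hlt ih =>
    rw [bwd_cons_lt a b A B hlt]
    intro p hp
    rcases List.mem_cons.1 hp with h | h
    · subst h; exact hA a (by simp)
    · refine ih (fun x hx => hA x (by simp [hx])) ?_ p h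
      intro x hx
      rcases List.mem_cons.1 hx with h' | h'
      · omega
      · exact hB x (by simp [h'])
  | case5 a A b B hne hnlt ih =>
    have hgt : b < a := by omega
    rw [bwd_cons_gt a b A B hgt]
    intro p hp
    rcases List.mem_cons.1 hp with h | h
    · subst h; exact hB b (by simp)
    · refine ih ?_ (fun x hx => hB x (by simp [hx])) p h
      intro x hx
      rcases List.mem_cons.1 hx with h' | h'
      · omega
      · exact hA x (by simp [h'])

lemma bwd_sum (A B : List ℕ) (hA : ∀ x ∈ A, 0 < x) (hB : ∀ x ∈ B, 0 < x)
    (hs : A.sum = B.sum) : ((bwd A B).map Prod.fst).sum = A.sum := by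
  induction A, B using bwd.induct with
  | case1 B => simp [bwd_nil]
  | case2 a A =>
    exfalso
    have := hA a (by simp)
    simp at hs
    omega
  | case3 A b B ih =>
    rw [bwd_cons_eq]
    have := ih (fun x hx => hA x (by simp [hx])) (fun x hx => hB x (by simp [hx]))
      (by simp at hs; omega)
    simp [this]
  | case4 a A b B hne hlt ih =>
    rw [bwd_cons_lt a b A B hlt]
    have := ih (fun x hx => hA x (by simp [hx]))
      (fun x hx => by rcases List.mem_cons.1 hx with h' | h'
                      · omega
                      · exact hB x (by simp [h']))
      (by simp at hs ⊢; omega)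
    simp [this]
  | case5 a A b B hne hnlt ih =>
    have hgt : b < a := by omega
    rw [bwd_cons_gt a b A B hgt]
    have := ih (fun x hx => by rcases List.mem_cons.1 hx with h' | h'
                               · omega
                               · exact hA x (by simp [h']))
      (fun x hx => hB x (by simp [hx]))
      (by simp at hs ⊢; omega)
    simp at this ⊢
    omega

lemma nil_of_sum_zero (A : List ℕ) (hA : ∀ x ∈ A, 0 < x) (h : A.sum = 0) : A = [] := by
  cases A with
  | nil => rfl
  | cons a A => have := hA a (by simp); simp at h; omega

lemma getLast?_cons_ne {α : Type*} (x : α) (l : List α) (h : l ≠ []) :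
    (x :: l).getLast? = l.getLast? := by
  cases l with
  | nil => exact absurd rfl h
  | cons y ys => exact List.getLast?_cons_cons

lemma bwd_last (A B : List ℕ) (hA : ∀ x ∈ A, 0 < x) (hB : ∀ x ∈ B, 0 < x)
    (hs : A.sum = B.sum) : ∀ p, (bwd A B).getLast? = some p → p.2 = 0 := by
  induction A, B using bwd.induct with
  | case1 B => simp [bwd_nil]
  | case2 a A => simp [bwd]
  | case3 A b B ih =>
    rw [bwd_cons_eq]
    have hb : 0 < b := hB b (by simp)
    have hA' : ∀ x ∈ A, 0 < x := fun x hx => hA x (by simp [hx])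
    have hB' : ∀ x ∈ B, 0 < x := fun x hx => hB x (by simp [hx])
    have hs' : A.sum = B.sum := by simp at hs; omega
    cases hA'' : A with
    | nil =>
      have : B = [] := nil_of_sum_zero B hB' (by rw [← hs']; simp [hA''])
      subst this; subst hA''
      intro p hp
      simp [bwd_nil] at hp
      simp [← hp]
    | cons a' A' =>
      cases hB'' : B with
      | nil =>
        exfalso
        have := hA' a' (by simp [hA''])
        rw [hA'', hB''] at hs'
        simp at hs'
        omega
      | cons b' B' =>
        subst hA''; subst hB''
        intro p hp
        rw [getLast?_cons_ne _ _ (bwd_ne_nil _ _ _ _)] at hp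
        exact ih hA' hB' hs' p hp
  | case4 a A b B hne hlt ih =>
    rw [bwd_cons_lt a b A B hlt]
    have hA' : ∀ x ∈ A, 0 < x := fun x hx => hA x (by simp [hx])
    have hB' : ∀ x ∈ (b - a) :: B, 0 < x := by
      intro x hx
      rcases List.mem_cons.1 hx with h' | h'
      · omega
      · exact hB x (by simp [h'])
    have hs' : A.sum = ((b - a) :: B).sum := by simp at hs ⊢; omega
    cases hA'' : A with
    | nil =>
      exfalso
      rw [hA''] at hs'
      simp at hs'
      omega
    | cons a' A' =>
      subst hA''
      intro p hp
      rw [getLast?_cons_ne _ _ (bwd_ne_nil _ _ _ _)] at hp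
      exact ih hA' hB' hs' p hp
  | case5 a A b B hne hnlt ih =>
    have hgt : b < a := by omega
    rw [bwd_cons_gt a b A B hgt]
    have hA' : ∀ x ∈ (a - b) :: A, 0 < x := by
      intro x hx
      rcases List.mem_cons.1 hx with h' | h'
      · omega
      · exact hA x (by simp [h'])
    have hB' : ∀ x ∈ B, 0 < x := fun x hx => hB x (by simp [hx])
    have hs' : ((a - b) :: A).sum = B.sum := by simp at hs ⊢; omega
    cases hB'' : B with
    | nil =>
      exfalso
      rw [hB''] at hs'
      simp at hs'
      omega
    | cons b' B' =>
      subst hB''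
      intro p hp
      rw [getLast?_cons_ne _ _ (bwd_ne_nil _ _ _ _)] at hp
      exact ih hA' hB' hs' p hp

lemma bwd_fwd (l : List (ℕ × Fin 3)) (hl : ∀ p ∈ l, 0 < p.1)
    (hlast : ∀ p, l.getLast? = some p → p.2 = 0) :
    bwd (fwd l).1 (fwd l).2 = l := by
  induction l using fwd.induct with
  | case1 => simp [fwd, bwd_nil]
  | case2 a c =>
    have hc : c = 0 := hlast (a, c) (by simp)
    subst hc
    show bwd [a] [a] = [(a, 0)]
    rw [bwd_cons_eq, bwd_nil]
  | case3 a x l ih =>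
    have ih' := ih (fun p hp => hl p (by simp [hp]))
      (fun p hp => hlast p (by rwa [List.getLast?_cons_cons]))
    rw [fwd_cons0, bwd_cons_eq, ih']
  | case4 a x l h ih =>
    have ih' := ih (fun p hp => hl p (by simp [hp]))
      (fun p hp => hlast p (by rwa [List.getLast?_cons_cons]))
    have ha : 0 < a := hl (a, 1) (by simp)
    rw [fwd_cons1]
    cases h2 : (fwd (x :: l)).2 with
    | nil => exact absurd h2 (fwd_ne_nil2 _ _)
    | cons y ys =>
      have hy : 0 < y := fwd_pos2 (x :: l) (fun p hp => hl p (by simp [hp])) y (by rw [h2]; simp)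
      rw [mg_cons, bwd_cons_lt a (a + y) _ _ (by omega)]
      have : a + y - a = y := by omega
      rw [this, ← h2, ih']
  | case5 a c x l h0 h1 ih =>
    have hc : c = 2 := eq_two_of_ne c h0 h1
    subst hc
    have ih' := ih (fun p hp => hl p (by simp [hp]))
      (fun p hp => hlast p (by rwa [List.getLast?_cons_cons]))
    have ha : 0 < a := hl (a, 2) (by simp)
    rw [fwd_cons2]
    cases h2 : (fwd (x :: l)).1 with
    | nil => exact absurd h2 (fwd_ne_nil1 _ _)
    | cons y ys =>
      have hy : 0 < y := fwd_pos1 (x :: l) (fun p hp => hl p (by simp [hp])) y (by rw [h2]; simp)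
      rw [mg_cons, bwd_cons_gt (a + y) a _ _ (by omega)]
      have : a + y - a = y := by omega
      rw [this, ← h2, ih']

lemma fwd_bwd (A B : List ℕ) (hA : ∀ x ∈ A, 0 < x) (hB : ∀ x ∈ B, 0 < x)
    (hs : A.sum = B.sum) : fwd (bwd A B) = (A, B) := by
  induction A, B using bwd.induct with
  | case1 B =>
    have : B = [] := nil_of_sum_zero B hB (by simp at hs; omega)
    subst this
    simp [bwd_nil, fwd]
  | case2 a A =>
    exfalso
    have := hA a (by simp)
    simp at hs
    omega
  | case3 A b B ih =>
    have hA' : ∀ x ∈ A, 0 < x := fun x hx => hA x (by simp [hx])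
    have hB' : ∀ x ∈ B, 0 < x := fun x hx => hB x (by simp [hx])
    have hs' : A.sum = B.sum := by simp at hs; omega
    rw [bwd_cons_eq]
    cases hA'' : A with
    | nil =>
      have hBnil : B = [] := nil_of_sum_zero B hB' (by rw [← hs', hA'']; simp)
      subst hBnil; subst hA''
      rw [bwd_nil]
      rfl
    | cons a' A' =>
      cases hB'' : B with
      | nil =>
        exfalso
        have := hA' a' (by simp [hA''])
        rw [hA'', hB''] at hs'
        simp at hs'
        omega
      | cons b' B' =>
        subst hA''; subst hB''
        have ih' := ih hA' hB' hs'
        cases hrest : bwd (a' :: A') (b' :: B') with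
        | nil => exact absurd hrest (bwd_ne_nil _ _ _ _)
        | cons r rs =>
          rw [fwd_cons0, ← hrest, ih']
  | case4 a A b B hne hlt ih =>
    have hA' : ∀ x ∈ A, 0 < x := fun x hx => hA x (by simp [hx])
    have hB' : ∀ x ∈ (b - a) :: B, 0 < x := by
      intro x hx
      rcases List.mem_cons.1 hx with h' | h'
      · omega
      · exact hB x (by simp [h'])
    have hs' : A.sum = ((b - a) :: B).sum := by simp at hs ⊢; omega
    rw [bwd_cons_lt a b A B hlt]
    cases hA'' : A with
    | nil =>
      exfalso
      rw [hA''] at hs'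
      simp at hs'
      omega
    | cons a' A' =>
      subst hA''
      have ih' := ih hA' hB' hs'
      cases hrest : bwd (a' :: A') ((b - a) :: B) with
      | nil => exact absurd hrest (bwd_ne_nil _ _ _ _)
      | cons r rs =>
        rw [fwd_cons1, ← hrest, ih']
        have : a + (b - a) = b := by omega
        simp [mg, this]
  | case5 a A b B hne hnlt ih =>
    have hgt : b < a := by omega
    have hA' : ∀ x ∈ (a - b) :: A, 0 < x := by
      intro x hx
      rcases List.mem_cons.1 hx with h' | h'
      · omega
      · exact hA x (by simp [h'])
    have hB' : ∀ x ∈ B, 0 < x := fun x hx => hB x (by simp [hx])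
    have hs' : ((a - b) :: A).sum = B.sum := by simp at hs ⊢; omega
    rw [bwd_cons_gt a b A B hgt]
    cases hB'' : B with
    | nil =>
      exfalso
      rw [hB''] at hs'
      simp at hs'
      omega
    | cons b' B' =>
      subst hB''
      have ih' := ih hA' hB' hs'
      cases hrest : bwd ((a - b) :: A) (b' :: B') with
      | nil => exact absurd hrest (bwd_ne_nil _ _ _ _)
      | cons r rs =>
        rw [fwd_cons2, ← hrest, ih']
        have : b + (a - b) = a := by omega
        simp [mg, this]

theorem threeComps_equiv_pairs (n : ℕ) (hn : 1 ≤ n) :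
    Nonempty ({l : List (ℕ × Fin 3) // Is3Composition n l} ≃
      {p : List ℕ × List ℕ // IsComposition n p.1 ∧ IsComposition n p.2}) := by
  refine ⟨{
    toFun := fun l => ⟨fwd l.1, ?_, ?_⟩
    invFun := fun p => ⟨bwd p.1.1 p.1.2, ?_, ?_, ?_⟩
    left_inv := ?_
    right_inv := ?_ }⟩
  · obtain ⟨l, hpos, hsum, hlast⟩ := l
    exact ⟨fwd_pos1 l hpos, by rw [fwd_sum1]; exact hsum⟩
  · obtain ⟨l, hpos, hsum, hlast⟩ := l
    exact ⟨fwd_pos2 l hpos, by rw [fwd_sum2]; exact hsum⟩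
  · obtain ⟨⟨A, B⟩, ⟨hA, hAs⟩, ⟨hB, hBs⟩⟩ := p
    exact bwd_pos A B hA hB
  · obtain ⟨⟨A, B⟩, ⟨hA, hAs⟩, ⟨hB, hBs⟩⟩ := p
    rw [bwd_sum A B hA hB (hAs.trans hBs.symm)]
    exact hAs
  · obtain ⟨⟨A, B⟩, ⟨hA, hAs⟩, ⟨hB, hBs⟩⟩ := p
    exact bwd_last A B hA hB (hAs.trans hBs.symm)
  · rintro ⟨l, hpos, hsum, hlast⟩
    exact Subtype.ext (bwd_fwd l hpos hlast)
  · rintro ⟨⟨A, B⟩, ⟨hA, hAs⟩, ⟨hB, hBs⟩⟩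
    exact Subtype.ext (fwd_bwd A B hA hB (hAs.trans hBs.symm))
end

section
/- The total number of peaks in all Dyck paths of length 2n, for n ≥ 1, equals C(2n-1, n). -/
def IsStepWord (w : List ℤ) : Prop := ∀ s ∈ w, s = 1 ∨ s = -1

/-- partial sum (height) after `i` steps -/
def psum (w : List ℤ) (i : ℕ) : ℤ := (w.take i).sum

def IsDyckPath (w : List ℤ) : Prop :=
  IsStepWord w ∧ (∀ i, 0 ≤ psum w i) ∧ w.sum = 0

def IsBridge (w : List ℤ) : Prop := IsStepWord w ∧ w.sum = 0

def IsPeak (w : List ℤ) (i : ℕ) : Prop := w[i]? = some 1 ∧ w[i+1]? = some (-1)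

/-- height of the apex of the peak at position `i` -/
def peakHeight (w : List ℤ) (i : ℕ) : ℤ := psum w (i+1)

/-- number of crossings of the x-axis -/
def crossings (w : List ℤ) : ℕ :=
  ((Finset.range w.length).filter
    (fun i => psum w (i+1) = 0 ∧ psum w i * psum w (i+2) < 0)).card


lemma psum_zero (w : List ℤ) : psum w 0 = 0 := rfl

lemma psum_append (a b : List ℤ) (k : ℕ) :
    psum (a ++ b) k = psum a k + psum b (k - a.length) := by
  unfold psum
  rw [List.take_append, List.sum_append]

lemma psum_take (v : List ℤ) (j k : ℕ) : psum (v.take j) k = psum v (min k j) := by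
  unfold psum; rw [List.take_take]

lemma psum_cons (x : ℤ) (l : List ℤ) (k : ℕ) : psum (x :: l) (k+1) = x + psum l k := by
  unfold psum; rw [List.take_succ_cons, List.sum_cons]

lemma psum_add_drop (v : List ℤ) (j m : ℕ) :
    psum v (j + m) = psum v j + psum (v.drop j) m := by
  unfold psum
  rw [List.take_add, List.sum_append]

/-- insert a peak `ud` at position `j` -/
def ins (v : List ℤ) (j : ℕ) : List ℤ := v.take j ++ 1 :: -1 :: v.drop j

lemma length_take_of_le {v : List ℤ} {j : ℕ} (hj : j ≤ v.length) :
    (v.take j).length = j := by simp [hj]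

lemma psum_ins_le {v : List ℤ} {j k : ℕ} (hj : j ≤ v.length) (hk : k ≤ j) :
    psum (ins v j) k = psum v k := by
  rw [ins, psum_append, length_take_of_le hj, Nat.sub_eq_zero_of_le hk, psum_zero,
    add_zero, psum_take, min_eq_left hk]

lemma psum_ins_mid {v : List ℤ} {j : ℕ} (hj : j ≤ v.length) :
    psum (ins v j) (j+1) = psum v j + 1 := by
  rw [ins, psum_append, length_take_of_le hj, psum_take]
  have h1 : j + 1 - j = 1 := by omega
  have h2 : min (j+1) j = j := by omega
  rw [h1, h2, psum_cons, psum_zero]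
  ring

lemma psum_ins_ge {v : List ℤ} {j : ℕ} (hj : j ≤ v.length) (k : ℕ) :
    psum (ins v j) (j+2+k) = psum v (j+k) := by
  rw [ins, psum_append, length_take_of_le hj, psum_take]
  have h1 : j + 2 + k - j = (k+1)+1 := by omega
  have h2 : min (j+2+k) j = j := by omega
  rw [h1, h2, psum_cons, psum_cons, psum_add_drop]
  ring

lemma sum_ins (v : List ℤ) (j : ℕ) : (ins v j).sum = v.sum := by
  have := congrArg List.sum (List.take_append_drop j v)
  rw [List.sum_append] at this
  simp only [ins, List.sum_append, List.sum_cons]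
  linarith

lemma length_ins {v : List ℤ} {j : ℕ} (hj : j ≤ v.length) :
    (ins v j).length = v.length + 2 := by
  simp [ins]; omega

lemma getElem?_ins_self {v : List ℤ} {j : ℕ} (hj : j ≤ v.length) :
    (ins v j)[j]? = some 1 := by
  rw [ins, List.getElem?_append_right (by rw [length_take_of_le hj]), length_take_of_le hj]
  simp

lemma getElem?_ins_succ {v : List ℤ} {j : ℕ} (hj : j ≤ v.length) :
    (ins v j)[j+1]? = some (-1) := by
  rw [ins, List.getElem?_append_right (by rw [length_take_of_le hj]; omega),
    length_take_of_le hj]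
  have : j + 1 - j = 1 := by omega
  rw [this]
  simp

lemma isDyckPath_ins {v : List ℤ} {j : ℕ} (hv : IsDyckPath v) (hj : j ≤ v.length) :
    IsDyckPath (ins v j) := by
  obtain ⟨hs, hp, h0⟩ := hv
  refine ⟨?_, ?_, ?_⟩
  · intro s hsm
    simp only [ins, List.mem_append, List.mem_cons] at hsm
    rcases hsm with h | h | h | h
    · exact hs s (List.take_subset _ _ h)
    · left; exact h
    · right; exact h
    · exact hs s (List.drop_subset _ _ h)
  · intro k
    rcases Nat.lt_or_ge k (j+1) with hk | hk
    · rw [psum_ins_le hj (by omega)]; exact hp k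
    rcases Nat.lt_or_ge k (j+2) with hk2 | hk2
    · have : k = j + 1 := by omega
      rw [this, psum_ins_mid hj]
      have := hp j; linarith
    · obtain ⟨m, rfl⟩ : ∃ m, k = j + 2 + m := ⟨k - (j+2), by omega⟩
      rw [psum_ins_ge hj]; exact hp _
  · rw [sum_ins]; exact h0

lemma ins_take_drop {v : List ℤ} {j : ℕ} (hj : j ≤ v.length) :
    (ins v j).take j = v.take j ∧ (ins v j).drop (j+2) = v.drop j := by
  constructor
  · rw [ins, List.take_append, length_take_of_le hj, Nat.sub_self,
      List.take_zero, List.append_nil, List.take_take, min_self]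
  · have : ins v j = (v.take j ++ [1, -1]) ++ v.drop j := by simp [ins]
    rw [this, List.drop_left' (by simp [length_take_of_le hj])]

lemma ins_injective {v₁ v₂ : List ℤ} {j : ℕ} (h1 : j ≤ v₁.length) (h2 : j ≤ v₂.length)
    (h : ins v₁ j = ins v₂ j) : v₁ = v₂ := by
  have e1 := ins_take_drop h1
  have e2 := ins_take_drop h2
  have : v₁.take j ++ v₁.drop j = v₂.take j ++ v₂.drop j := by
    rw [← e1.1, ← e1.2, ← e2.1, ← e2.2, h]
  simpa using this

/-- decomposition of a path at a peak -/
lemma peak_decomp {w : List ℤ} {i : ℕ} (hpk : IsPeak w i) :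
    i + 1 < w.length ∧ w = ins (w.take i ++ w.drop (i+2)) i := by
  obtain ⟨h1, h2⟩ := hpk
  rw [List.getElem?_eq_some_iff] at h1 h2
  obtain ⟨hi1, hw1⟩ := h1
  obtain ⟨hi2, hw2⟩ := h2
  refine ⟨hi2, ?_⟩
  have hd : w.drop i = 1 :: -1 :: w.drop (i+2) := by
    rw [List.drop_eq_getElem_cons (by omega), hw1,
      List.drop_eq_getElem_cons (i := i+1) (by omega), hw2]
  have hti : (w.take i).length = i := length_take_of_le (by omega)
  rw [ins, List.take_append, hti, Nat.sub_self, List.take_zero,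
    List.append_nil, List.take_take, min_self, List.drop_left' hti, ← hd,
    List.take_append_drop]

lemma removal_isDyckPath {w : List ℤ} {i : ℕ} (hw : IsDyckPath w) (hpk : IsPeak w i) :
    IsDyckPath (w.take i ++ w.drop (i+2)) ∧ i ≤ (w.take i ++ w.drop (i+2)).length := by
  obtain ⟨hlt, hdec⟩ := peak_decomp hpk
  set v := w.take i ++ w.drop (i+2) with hv
  have hvl : v.length = w.length - 2 := by
    rw [hv]
    simp only [List.length_append, List.length_take, List.length_drop]
    omega
  have hjv : i ≤ v.length := by omega
  obtain ⟨hs, hp, h0⟩ := hw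
  refine ⟨⟨?_, ?_, ?_⟩, hjv⟩
  · intro s hsm
    rcases List.mem_append.mp hsm with h | h
    · exact hs s (List.take_subset _ _ h)
    · exact hs s (List.drop_subset _ _ h)
  · intro k
    rcases Nat.le_total k i with hk | hk
    · rw [← psum_ins_le hjv hk, ← hdec]; exact hp k
    · obtain ⟨m, rfl⟩ : ∃ m, k = i + m := ⟨k - i, by omega⟩
      rw [← psum_ins_ge hjv, ← hdec]; exact hp _
  · have := sum_ins v i
    rw [← hdec] at this
    rw [← this, h0]

/-- the bijection between marked-peak Dyck paths and (shorter Dyck path, position) pairs -/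
lemma card_pairs (m : ℕ) :
    Nat.card {p : List ℤ × ℕ //
        IsDyckPath p.1 ∧ p.1.length = 2 * (m+1) ∧ IsPeak p.1 p.2} =
      Nat.card {w : List ℤ // IsDyckPath w ∧ w.length = 2 * m} * (2 * m + 1) := by
  have key : Nat.card {p : List ℤ × ℕ //
        IsDyckPath p.1 ∧ p.1.length = 2 * (m+1) ∧ IsPeak p.1 p.2} =
      Nat.card ({w : List ℤ // IsDyckPath w ∧ w.length = 2 * m} × Fin (2 * m + 1)) := by
    refine (Nat.card_congr (Equiv.ofBijective ?_ ⟨?_, ?_⟩)).symm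
    · rintro ⟨⟨v, hv, hvl⟩, j⟩
      refine ⟨(ins v j, j), isDyckPath_ins hv (by omega), ?_, ?_, ?_⟩
      · rw [length_ins (by omega), hvl]; ring
      · exact getElem?_ins_self (by omega)
      · exact getElem?_ins_succ (by omega)
    · rintro ⟨⟨v₁, hv₁, hl₁⟩, j₁⟩ ⟨⟨v₂, hv₂, hl₂⟩, j₂⟩ h
      simp only [Subtype.mk.injEq, Prod.mk.injEq] at h
      obtain ⟨h1, h2⟩ := h
      have hj : j₁ = j₂ := Fin.ext h2
      subst hj
      have : v₁ = v₂ := ins_injective (by omega) (by omega) h1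
      simp [this]
    · rintro ⟨⟨w, i⟩, hw, hwl, hpk⟩
      have hwl' : w.length = 2*(m+1) := hwl
      obtain ⟨hlt, hdec⟩ := peak_decomp hpk
      obtain ⟨hvd, hjv⟩ := removal_isDyckPath hw hpk
      have hvl : (w.take i ++ w.drop (i+2)).length = 2 * m := by
        simp only [List.length_append, List.length_take, List.length_drop]
        omega
      refine ⟨⟨⟨w.take i ++ w.drop (i+2), hvd, hvl⟩, ⟨i, by omega⟩⟩, ?_⟩
      simp only [Subtype.mk.injEq, Prod.mk.injEq]
      exact ⟨hdec.symm, trivial⟩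
  rw [key, Nat.card_prod, Nat.card_eq_fintype_card (α := Fin _), Fintype.card_fin]


/-- interpret a `DyckStep` as an integer step -/
def stepToInt : DyckStep → ℤ
  | DyckStep.U => 1
  | DyckStep.D => -1

/-- interpret an integer step as a `DyckStep` -/
def intToStep (x : ℤ) : DyckStep := if x = 1 then DyckStep.U else DyckStep.D

lemma sum_map_stepToInt (l : List DyckStep) :
    (l.map stepToInt).sum = (l.count DyckStep.U : ℤ) - l.count DyckStep.D := by
  induction l with
  | nil => simp
  | cons x t ih =>
    cases x <;> simp [stepToInt, ih, List.count_cons] <;> ring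

lemma stepToInt_injective : Function.Injective stepToInt := by
  intro a b h
  cases a <;> cases b <;> simp_all [stepToInt]

lemma isDyckPath_of_dyckWord (p : DyckWord) : IsDyckPath (p.toList.map stepToInt) := by
  refine ⟨?_, ?_, ?_⟩
  · intro s hs
    obtain ⟨x, _, rfl⟩ := List.mem_map.mp hs
    cases x <;> simp [stepToInt]
  · intro k
    have h1 : psum (p.toList.map stepToInt) k = ((p.toList.take k).map stepToInt).sum := by
      rw [psum, List.map_take]
    rw [h1, sum_map_stepToInt]
    have h2 : ((p.toList.take k).count DyckStep.D : ℤ) ≤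
        (p.toList.take k).count DyckStep.U := by
      exact_mod_cast p.count_D_le_count_U k
    linarith
  · rw [sum_map_stepToInt, p.count_U_eq_count_D]; ring

lemma card_dyck_lists (m : ℕ) :
    Nat.card {w : List ℤ // IsDyckPath w ∧ w.length = 2 * m} = catalan m := by
  rw [← DyckWord.card_dyckWord_semilength_eq_catalan, ← Nat.card_eq_fintype_card]
  refine (Nat.card_congr (Equiv.ofBijective
    (fun p => ⟨p.1.toList.map stepToInt, isDyckPath_of_dyckWord p.1, by
      rw [List.length_map, ← DyckWord.two_mul_semilength_eq_length, p.2]⟩) ⟨?_, ?_⟩)).symm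
  · rintro ⟨p₁, h₁⟩ ⟨p₂, h₂⟩ h
    simp only [Subtype.mk.injEq] at h
    exact Subtype.ext (DyckWord.ext ((List.map_injective_iff.mpr stepToInt_injective) h))
  · rintro ⟨w, ⟨hs, hp, h0⟩, hl⟩
    set l := w.map intToStep with hldef
    have hback : l.map stepToInt = w := by
      rw [hldef, List.map_map]
      have hc : ∀ x ∈ w, (stepToInt ∘ intToStep) x = x := by
        intro x hx
        rcases hs x hx with h | h <;> simp [h, intToStep, stepToInt]
      rw [List.map_congr_left hc]; simp
    have htake : ∀ k, ((l.take k).count DyckStep.U : ℤ) - (l.take k).count DyckStep.D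
        = psum w k := by
      intro k
      rw [← sum_map_stepToInt, psum]
      congr 1
      rw [List.map_take, hback]
    have hlen : l.length = w.length := by rw [hldef, List.length_map]
    have hcounts : l.count DyckStep.U = l.count DyckStep.D := by
      have h1 := htake l.length
      rw [List.take_length] at h1
      have hw0 : psum w l.length = 0 := by
        rw [psum, hlen, List.take_length, h0]
      rw [hw0] at h1
      omega
    have hpre : ∀ i, (l.take i).count DyckStep.D ≤ (l.take i).count DyckStep.U := by
      intro i
      have h1 := htake i
      have h2 := hp i
      omega
    set D : DyckWord := ⟨l, hcounts, hpre⟩ with hD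
    have hsemi : D.semilength = m := by
      have h2 : 2 * D.semilength = l.length := DyckWord.two_mul_semilength_eq_length (p := D)
      omega
    exact ⟨⟨D, hsemi⟩, Subtype.ext hback⟩

theorem total_peaks_card (n : ℕ) (hn : 1 ≤ n) :
    Nat.card {p : List ℤ × ℕ //
        IsDyckPath p.1 ∧ p.1.length = 2 * n ∧ IsPeak p.1 p.2} =
      (2 * n - 1).choose n := by
  obtain ⟨m, rfl⟩ : ∃ m, n = m + 1 := ⟨n - 1, by omega⟩
  rw [card_pairs m, card_dyck_lists m]
  have hc : 2 * (m+1) - 1 = 2*m+1 := by omega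
  rw [hc]
  have h1 : (m + 1) * catalan m = Nat.centralBinom m := succ_mul_catalan_eq_centralBinom m
  have h2 : (2*m+1) * ((2*m).choose m) = (2*m+1).choose (m+1) * (m+1) := by
    simpa using Nat.add_one_mul_choose_eq (2*m) m
  have h3 : Nat.centralBinom m = (2*m).choose m := rfl
  apply Nat.eq_of_mul_eq_mul_left (show 0 < m+1 by omega)
  calc (m+1) * (catalan m * (2*m+1)) = ((m+1) * catalan m) * (2*m+1) := by ring
    _ = Nat.centralBinom m * (2*m+1) := by rw [h1]
    _ = (2*m+1) * ((2*m).choose m) := by rw [h3]; ring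
    _ = (2*m+1).choose (m+1) * (m+1) := h2
    _ = (m+1) * ((2*m+1).choose (m+1)) := by ring
end

section
/- For every fixed r ≥ 1 and every n > r, the number D_r(n) of Dyck paths of semi-length n that have exactly r peaks at every reached height is divisible by r + 1. -/
/-- number of peaks of  23:39:17 up 5 min,  0 user,  load average: 0.00, 0.00, 0.00
USER     TTY      FROM             LOGIN@   IDLE   JCPU   PCPU WHAT at height  -/
def peaksAt (w : List ℤ) (k : ℤ) : ℕ :=
  ((Finset.range w.length).filter
    (fun i => w[i]? = some 1 ∧ w[i+1]? = some (-1) ∧ psum w (i+1) = k)).card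


lemma psum_succ' {w : List ℤ} {i : ℕ} {c : ℤ} (h : w[i]? = some c) :
    psum w (i+1) = psum w i + c := by
  unfold psum
  rw [List.take_succ, h]
  simp

lemma psum_succ {w : List ℤ} {i : ℕ} (h : i < w.length) :
    psum w (i+1) = psum w i + w[i] := psum_succ' (List.getElem?_eq_getElem h)

lemma psum_of_length_le {w : List ℤ} {i : ℕ} (h : w.length ≤ i) : psum w i = w.sum := by
  unfold psum; rw [List.take_of_length_le h]

lemma psum_length (w : List ℤ) : psum w w.length = w.sum := psum_of_length_le le_rfl

lemma psum_append_s15 (x y : List ℤ) (j : ℕ) :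
    psum (x ++ y) j = psum x j + psum y (j - x.length) := by
  unfold psum
  rw [List.take_append, List.sum_append]

lemma psum_append_right (x y : List ℤ) (j : ℕ) :
    psum (x ++ y) (x.length + j) = x.sum + psum y j := by
  rw [psum_append_s15, psum_of_length_le (Nat.le_add_right _ _)]
  have h2 : x.length + j - x.length = j := by omega
  rw [h2]

lemma psum_append_left {x : List ℤ} (y : List ℤ) {j : ℕ} (h : j ≤ x.length) :
    psum (x ++ y) j = psum x j := by
  rw [psum_append_s15, Nat.sub_eq_zero_of_le h, psum_zero, add_zero]


lemma peaksAt_append (x y : List ℤ) (k : ℤ) (h : y.head? ≠ some (-1)) :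
    peaksAt (x ++ y) k = peaksAt x k + peaksAt y (k - x.sum) := by
  classical
  unfold peaksAt
  rw [List.length_append, Finset.range_add, Finset.filter_union,
    Finset.card_union_of_disjoint, Finset.filter_map, Finset.card_map]
  · congr 1
    · refine congrArg Finset.card (Finset.filter_congr ?_)
      intro i hi
      simp only [Finset.mem_range] at hi
      have h1 : (x ++ y)[i]? = x[i]? := List.getElem?_append_left hi
      have h3 : psum (x ++ y) (i+1) = psum x (i+1) := psum_append_left y hi
      rcases Nat.lt_or_ge (i+1) x.length with h2 | h2
      · have : (x ++ y)[i+1]? = x[i+1]? := List.getElem?_append_left h2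
        rw [h1, h3, this]
      · have h2' : i + 1 = x.length := by omega
        have hy : (x ++ y)[i+1]? = y[0]? := by
          rw [List.getElem?_append_right (le_of_eq h2'.symm), h2']
          simp
        have hx : x[i+1]? = none := by
          rw [List.getElem?_eq_none_iff]; omega
        rw [h1, h3, hy, hx]
        simp only [List.head?_eq_getElem?] at h
        simp only [eq_self_iff_true, iff_iff_implies_and_implies]
        constructor
        · rintro ⟨-, hc, -⟩; exact absurd hc h
        · rintro ⟨-, hc, -⟩; exact absurd hc (by simp)
    · refine congrArg Finset.card (Finset.filter_congr ?_)
      intro i hi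
      simp only [Finset.mem_range] at hi
      have e : ∀ j : ℕ, (addLeftEmbedding x.length) i + j = x.length + (i + j) := by
        intro j; simp [addLeftEmbedding]; omega
      have e0 : ((addLeftEmbedding x.length) i : ℕ) = x.length + i := by
        simp [addLeftEmbedding]
      have h1 : (x ++ y)[x.length + i]? = y[i]? := by
        rw [List.getElem?_append_right (Nat.le_add_right _ _)]
        congr 1; omega
      have h2 : (x ++ y)[x.length + i + 1]? = y[i+1]? := by
        rw [show x.length + i + 1 = x.length + (i+1) by omega,
          List.getElem?_append_right (Nat.le_add_right _ _)]
        congr 1; omega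
      have h3 : psum (x ++ y) (x.length + i + 1) = x.sum + psum y (i+1) := by
        rw [show x.length + i + 1 = x.length + (i+1) by omega]
        exact psum_append_right x y (i+1)
      simp only [Function.comp_apply, e0]
      rw [h1, h2, h3]
      constructor
      · rintro ⟨a, b, c⟩; exact ⟨a, b, by linarith⟩
      · rintro ⟨a, b, c⟩; exact ⟨a, b, by linarith⟩
  · apply Finset.disjoint_filter_filter
    rw [Finset.disjoint_left]
    intro a ha hb
    simp only [Finset.mem_range] at ha
    simp only [Finset.mem_map, Finset.mem_range] at hb
    obtain ⟨b, -, hb⟩ := hb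
    simp [addLeftEmbedding] at hb
    omega


lemma addOrderOf_dvd_card_of_closed {G : Type*} [AddGroup G] [Fintype G] (g : G) :
    ∀ (T : Finset G), (∀ x ∈ T, x + g ∈ T) → addOrderOf g ∣ T.card := by
  classical
  intro T
  induction T using Finset.strongInduction with
  | _ T ih =>
    intro hT
    rcases T.eq_empty_or_nonempty with rfl | ⟨x, hx⟩
    · simp
    · set m := addOrderOf g with hm
      have hm0 : 0 < m := addOrderOf_pos g
      have hclosed : ∀ j : ℕ, x + j • g ∈ T := by
        intro j; induction j with
        | zero => simpa using hx
        | succ j ihj =>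
          have h2 := hT _ ihj
          rw [succ_nsmul, ← add_assoc]
          exact h2
      have hinj : ∀ a < m, ∀ b < m, x + a • g = x + b • g → a = b := by
        have key : ∀ a b : ℕ, a ≤ b → b < m → x + a • g = x + b • g → a = b := by
          intro a b hle hb hab
          rw [add_right_inj] at hab
          have hd : (b - a) • g = 0 := by
            have hb' : (b - a) • g + a • g = b • g := by rw [← add_nsmul]; congr 1; omega
            rw [← hab] at hb'
            exact add_right_cancel (hb'.trans (zero_add (a • g)).symm)
          have hdvd0 := addOrderOf_dvd_iff_nsmul_eq_zero.2 hd
          rw [← hm] at hdvd0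
          rcases Nat.eq_zero_or_pos (b - a) with h0 | h0
          · omega
          · have := Nat.le_of_dvd h0 hdvd0; omega
        intro a ha b hb hab
        rcases Nat.le_total a b with h | h
        · exact key a b h hb hab
        · exact (key b a h ha hab.symm).symm
      set O : Finset G := (Finset.range m).image (fun j => x + j • g) with hO
      have hOsub : O ⊆ T := by
        intro y hy
        simp only [hO, Finset.mem_image, Finset.mem_range] at hy
        obtain ⟨j, -, rfl⟩ := hy
        exact hclosed j
      have hOcard : O.card = m := by
        rw [hO, Finset.card_image_of_injOn, Finset.card_range]
        intro a ha b hb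
        simp only [Finset.coe_range, Set.mem_Iio] at ha hb
        exact hinj a ha b hb
      have hxO : x ∈ O := by
        simp only [hO, Finset.mem_image, Finset.mem_range]
        exact ⟨0, hm0, by simp⟩
      have hTO : ∀ y ∈ T \ O, y + g ∈ T \ O := by
        intro y hy
        rw [Finset.mem_sdiff] at hy ⊢
        refine ⟨hT _ hy.1, fun hmem => hy.2 ?_⟩
        simp only [hO, Finset.mem_image, Finset.mem_range] at hmem ⊢
        obtain ⟨j, hj, hjy⟩ := hmem
        rcases Nat.eq_zero_or_pos j with rfl | hj0
        · refine ⟨m - 1, by omega, ?_⟩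
          have hx' : x = y + g := by simpa using hjy
          have hstep : x + (m-1) • g + g = y + g := by
            rw [add_assoc, ← succ_nsmul, show m - 1 + 1 = m by omega, hm,
              addOrderOf_nsmul_eq_zero g, add_zero]
            exact hx'
          exact add_right_cancel hstep
        · refine ⟨j - 1, by omega, ?_⟩
          have hstep : x + (j-1+1) • g = y + g := by
            rw [show j - 1 + 1 = j by omega]; exact hjy
          rw [succ_nsmul, ← add_assoc] at hstep
          exact add_right_cancel hstep
      have hssub : T \ O ⊂ T := Finset.sdiff_ssubset hOsub ⟨x, hxO⟩
      have hdvd := ih (T \ O) hssub hTO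
      have hcard : T.card = (T \ O).card + m := by
        rw [Finset.card_sdiff_of_subset hOsub, hOcard]
        have := Finset.card_le_card hOsub
        omega
      rw [hcard]
      exact Nat.dvd_add hdvd ⟨1, by omega⟩


lemma step_getElem {w : List ℤ} (h : IsStepWord w) {i : ℕ} (hi : i < w.length) :
    w[i] = 1 ∨ w[i] = -1 := h _ (List.getElem_mem hi)

lemma dyck_last {u : List ℤ} (hu : IsDyckPath u) (hne : u.length ≠ 0) :
    u[u.length - 1]? = some (-1) := by
  obtain ⟨hstep, hnn, hsum⟩ := hu
  have h1 : psum u u.length = 0 := by rw [psum_length, hsum]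
  have h2 : psum u (u.length - 1 + 1) = psum u (u.length-1) + u[u.length-1]'(by omega) :=
    psum_succ (by omega)
  rw [show u.length - 1 + 1 = u.length by omega] at h2
  have h3 := hnn (u.length - 1)
  rw [List.getElem?_eq_getElem (by omega : u.length - 1 < u.length)]
  rcases step_getElem hstep (show u.length - 1 < u.length by omega) with h | h
  · exfalso; rw [h] at h2; linarith
  · rw [h]

lemma dyck_first {u : List ℤ} (hu : IsDyckPath u) (hne : u.length ≠ 0) :
    u[0]? = some 1 := by
  obtain ⟨hstep, hnn, hsum⟩ := hu
  have h2 : psum u 1 = psum u 0 + u[0]'(by omega) := psum_succ (by omega)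
  have h3 := hnn 1
  rw [List.getElem?_eq_getElem (by omega : 0 < u.length)]
  rcases step_getElem hstep (show 0 < u.length by omega) with h | h
  · rw [h]
  · exfalso; rw [h] at h2; rw [psum_zero] at h2; linarith

lemma no_period {u : List ℤ} (hu : IsDyckPath u) {d : ℕ} (hd0 : 0 < d) (hdl : d < u.length)
    (hrot : u.rotate d = u) {r : ℕ}
    (h1 : peaksAt u 1 = r + 1) (h2 : peaksAt u 2 = r) : False := by
  classical
  obtain ⟨hstep, hnn, hsum⟩ := hu
  set l := u.length with hl
  have hl0 : 0 < l := by omega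
  have hdle : d ≤ l := le_of_lt hdl
  have hsplit : u = u.drop d ++ u.take d := by
    conv_lhs => rw [← hrot]
    exact List.rotate_eq_drop_append_take hdle
  have hta : (u.take d).length = d := by rw [List.length_take]; omega
  have htb : (u.drop d).length = l - d := by rw [List.length_drop]
  have hsa : (u.take d).sum = psum u d := rfl
  have hsum_ab : (u.take d).sum + (u.drop d).sum = 0 := by
    rw [← List.sum_append, List.take_append_drop, hsum]
  have hb0 : psum u (l - d) = (u.drop d).sum := by
    conv_lhs => rw [hsplit]
    rw [psum_append_left _ (by omega : l - d ≤ (u.drop d).length)]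
    rw [← psum_length (u.drop d), htb]
  have ha0 : psum u d = 0 := by
    have g1 := hnn d
    have g2 := hnn (l - d)
    rw [hb0] at g2
    rw [← hsa] at g1 ⊢
    linarith
  have hbsum0 : (u.drop d).sum = 0 := by
    rw [← hsa] at ha0; linarith
  have hpsum_shift : ∀ i, i < l → psum u ((i + d) % l) = psum u i := by
    intro i hi
    rcases Nat.lt_or_ge (i + d) l with hc | hc
    · rw [Nat.mod_eq_of_lt hc]
      have e1 := psum_append_right (u.take d) (u.drop d) i
      rw [List.take_append_drop, hta] at e1
      have e2 := psum_append_left (x := u.drop d) (u.take d) (j := i) (by omega)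
      rw [← hsplit] at e2
      have htake0 : (u.take d).sum = 0 := by rw [hsa, ha0]
      rw [show i + d = d + i by omega, e1, e2, htake0, zero_add]
    · have hmod : (i + d) % l = i + d - l := by
        rw [Nat.mod_eq_sub_mod hc, Nat.mod_eq_of_lt (by omega)]
      rw [hmod]
      set j := i + d - l with hj
      have e1 := psum_append_left (x := u.take d) (u.drop d) (j := j) (by omega)
      rw [List.take_append_drop] at e1
      have e2 := psum_append_right (u.drop d) (u.take d) j
      rw [← hsplit, htb] at e2
      have e3 : psum u i = psum u (l - d + j) := by congr 1; omega
      rw [e1, e3, e2, hbsum0, zero_add]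
  have hget_shift : ∀ i, i < l → u[(i + d) % l]? = u[i]? := by
    intro i hi
    rcases Nat.lt_or_ge (i + d) l with hc | hc
    · rw [Nat.mod_eq_of_lt hc]
      have e1 : u[d + i]? = (u.drop d)[i]? := by
        conv_lhs => rw [← List.take_append_drop d u]
        rw [List.getElem?_append_right (by omega : (u.take d).length ≤ d + i)]
        congr 1; omega
      have e2 : u[i]? = (u.drop d)[i]? := by
        conv_lhs => rw [hsplit]
        exact List.getElem?_append_left (by omega)
      rw [show i + d = d + i by omega, e1, e2]
    · have hmod : (i + d) % l = i + d - l := by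
        rw [Nat.mod_eq_sub_mod hc, Nat.mod_eq_of_lt (by omega)]
      rw [hmod]
      have e1 : u[i + d - l]? = (u.take d)[i + d - l]? := by
        conv_lhs => rw [← List.take_append_drop d u]
        exact List.getElem?_append_left (by omega)
      have e2 : u[i]? = (u.take d)[i + d - l]? := by
        conv_lhs => rw [hsplit]
        rw [List.getElem?_append_right (by omega : (u.drop d).length ≤ i)]
        congr 1; omega
      rw [e1, e2]
  -- closure of peak sets
  have hclose : ∀ (k : ℤ) (i : ℕ),
      i ∈ (Finset.range l).filter
        (fun i => u[i]? = some 1 ∧ u[i+1]? = some (-1) ∧ psum u (i+1) = k) →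
      (i + d) % l ∈ (Finset.range l).filter
        (fun i => u[i]? = some 1 ∧ u[i+1]? = some (-1) ∧ psum u (i+1) = k) := by
    intro k i hi
    simp only [Finset.mem_filter, Finset.mem_range] at hi ⊢
    obtain ⟨hil, hgi, hgi1, hps⟩ := hi
    have hi1l : i + 1 < l := by
      by_contra hcon
      rw [List.getElem?_eq_none (by omega)] at hgi1
      exact absurd hgi1 (by simp)
    have hi'l : (i + d) % l < l := Nat.mod_lt _ hl0
    have hg' : u[(i + d) % l]? = some 1 := by rw [hget_shift i (by omega)]; exact hgi
    have hne : (i + d) % l ≠ l - 1 := by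
      intro hcon
      have hlast := dyck_last ⟨hstep, hnn, hsum⟩ (by omega)
      rw [← hl] at hlast
      rw [hcon, hlast] at hg'
      exact absurd (Option.some.inj hg') (by norm_num)
    have hlt : (i + d) % l + 1 < l := by omega
    have hmod1 : (i + 1 + d) % l = (i + d) % l + 1 := by
      rw [show i + 1 + d = (i + d) + 1 by omega, Nat.add_mod (i+d) 1 l,
        Nat.one_mod_eq_one.mpr (by omega), Nat.mod_eq_of_lt hlt]
    refine ⟨hi'l, hg', ?_, ?_⟩
    · rw [← hmod1, hget_shift (i+1) hi1l]; exact hgi1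
    · rw [← hmod1, hpsum_shift (i+1) hi1l]; exact hps
  haveI : NeZero l := ⟨by omega⟩
  have key : ∀ k : ℤ, addOrderOf (d : ZMod l) ∣ peaksAt u k := by
    intro k
    have hcards : peaksAt u k = ((Finset.range l).filter
        (fun i => u[i]? = some 1 ∧ u[i+1]? = some (-1) ∧ psum u (i+1) = k)).card := rfl
    rw [hcards]
    set S := (Finset.range l).filter
        (fun i => u[i]? = some 1 ∧ u[i+1]? = some (-1) ∧ psum u (i+1) = k) with hS
    have himg : (S.image (fun i : ℕ => (i : ZMod l))).card = S.card := by
      apply Finset.card_image_of_injOn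
      intro a ha b hb hab
      simp only [hS, Finset.coe_filter, Set.mem_setOf_eq, Finset.mem_range] at ha hb
      simp only at hab
      have hv : (a : ZMod l).val = (b : ZMod l).val := by rw [hab]
      rwa [ZMod.val_cast_of_lt ha.1, ZMod.val_cast_of_lt hb.1] at hv
    rw [← himg]
    apply addOrderOf_dvd_card_of_closed
    intro x hx
    simp only [Finset.mem_image] at hx ⊢
    obtain ⟨i, hi, rfl⟩ := hx
    refine ⟨(i + d) % l, hclose k i hi, ?_⟩
    rw [ZMod.natCast_mod]
    push_cast
    ring
  have k1 := key 1; rw [h1] at k1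
  have k2 := key 2; rw [h2] at k2
  have hdvd1 : addOrderOf (d : ZMod l) ∣ 1 := by
    have := Nat.dvd_sub k1 k2
    simpa using this
  rw [Nat.dvd_one, AddMonoid.addOrderOf_eq_one_iff] at hdvd1
  have hval := congrArg ZMod.val hdvd1
  rw [ZMod.val_cast_of_lt hdl, ZMod.val_zero] at hval
  omega


lemma exists_psum_eq {w : List ℤ} (hstep : IsStepWord w) {c : ℤ} (h0 : 0 ≤ c) :
    ∀ i, c ≤ psum w i → ∃ j, psum w j = c := by
  intro i
  induction i with
  | zero => intro h; rw [psum_zero] at h; exact ⟨0, by rw [psum_zero]; omega⟩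
  | succ i ih =>
    intro h
    rcases le_or_gt c (psum w i) with h' | h'
    · exact ih h'
    · rcases Nat.lt_or_ge i w.length with hil | hil
      · have hs := psum_succ hil
        rcases step_getElem hstep hil with he | he
        · rw [he] at hs
          exact ⟨i+1, by omega⟩
        · rw [he] at hs; omega
      · have e1 := psum_of_length_le hil
        have e2 := psum_of_length_le (show w.length ≤ i + 1 by omega)
        omega

lemma peaksAt_one_of_low {w : List ℤ} {n : ℕ} (hd : IsDyckPath w) (hlen : w.length = 2*n)
    (hlow : ∀ i, psum w i ≤ 1) : peaksAt w 1 = n := by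
  classical
  obtain ⟨hstep, hnn, hsum⟩ := hd
  have hps : ∀ i, i ≤ 2*n → psum w i = if i % 2 = 0 then 0 else 1 := by
    intro i
    induction i with
    | zero => intro _; simp [psum_zero]
    | succ i ih =>
      intro hi
      have hil : i < w.length := by omega
      have hs := psum_succ hil
      have hnn' := hnn (i+1)
      have hlow' := hlow (i+1)
      have hprev := ih (by omega)
      rcases step_getElem hstep hil with he | he <;> rw [he] at hs <;>
        split_ifs at hprev ⊢ <;> omega
  have hget : ∀ i, i < 2*n → w[i]? = some (if i % 2 = 0 then 1 else -1) := by
    intro i hi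
    have hil : i < w.length := by omega
    have hs := psum_succ hil
    have p1 := hps i (by omega)
    have p2 := hps (i+1) (by omega)
    rw [List.getElem?_eq_getElem hil]
    congr 1
    split_ifs at p1 p2 ⊢ <;> omega
  unfold peaksAt
  rw [hlen]
  have hfe : (Finset.range (2*n)).filter
        (fun i => w[i]? = some 1 ∧ w[i+1]? = some (-1) ∧ psum w (i+1) = 1)
      = (Finset.range n).image (fun j => 2*j) := by
    ext i
    simp only [Finset.mem_filter, Finset.mem_range, Finset.mem_image]
    constructor
    · rintro ⟨h1, h2, -, -⟩
      refine ⟨i/2, by omega, ?_⟩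
      rcases Nat.mod_two_eq_zero_or_one i with hp | hp
      · omega
      · exfalso
        have hg := hget i h1
        rw [if_neg (by omega)] at hg
        rw [hg] at h2
        exact absurd (Option.some.inj h2) (by norm_num)
    · rintro ⟨j, hj, rfl⟩
      have h2j : 2*j < 2*n := by omega
      have h2j1 : 2*j+1 < 2*n := by omega
      refine ⟨h2j, ?_, ?_, ?_⟩
      · rw [hget _ h2j, if_pos (by omega)]
      · rw [hget _ h2j1, if_neg (by omega)]
      · rw [hps (2*j+1) (by omega), if_neg (by omega)]
  rw [hfe, Finset.card_image_of_injective _ (fun a b h => by omega), Finset.card_range]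

lemma psum_one_eq_one {w : List ℤ} (hd : IsDyckPath w) (hne : w.length ≠ 0)
    (hfirst : w[0]? = some 1) : psum w 1 = 1 := by
  rw [psum_succ' hfirst, psum_zero, zero_add]

lemma reached_two {w : List ℤ} {n r : ℕ} (hd : IsDyckPath w) (hlen : w.length = 2*n)
    (hfirst : w[0]? = some 1)
    (hpk : ∀ k : ℤ, 1 ≤ k → (∃ i, psum w i = k) → peaksAt w k = r) (hrn : r < n) :
    ∃ i, psum w i = 2 := by
  by_contra hcon
  push_neg at hcon
  have hlow : ∀ i, psum w i ≤ 1 := by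
    intro i
    by_contra hlow'
    push_neg at hlow'
    obtain ⟨j, hj⟩ := exists_psum_eq hd.1 (by norm_num : (0:ℤ) ≤ 2) i (by omega)
    exact hcon j hj
  have h1 := peaksAt_one_of_low hd hlen hlow
  have hne : w.length ≠ 0 := by
    intro h0
    have : n = 0 := by omega
    omega
  have h2 := hpk 1 le_rfl ⟨1, psum_one_eq_one hd hne hfirst⟩
  omega

def ValidW (n r : ℕ) (w : List ℤ) : Prop :=
  IsDyckPath w ∧ w.length = 2 * n ∧
    ∀ k : ℤ, 1 ≤ k → (∃ i, psum w i = k) → peaksAt w k = r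

lemma pair_sum : ([1,-1] : List ℤ).sum = 0 := by norm_num

lemma peaksAt_pair (k : ℤ) : peaksAt [1,-1] k = if k = 1 then 1 else 0 := by
  classical
  unfold peaksAt
  rcases eq_or_ne k 1 with rfl | hk
  · rw [if_pos rfl]
    have he : (Finset.range ([(1:ℤ),-1]).length).filter
        (fun i => ([(1:ℤ),-1])[i]? = some 1 ∧ ([(1:ℤ),-1])[i+1]? = some (-1) ∧
          psum [1,-1] (i+1) = 1) = {0} := by
      ext i
      simp only [Finset.mem_filter, Finset.mem_range, Finset.mem_singleton,
        List.length_cons, List.length_nil]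
      constructor
      · rintro ⟨hi, h1, h2, h3⟩
        interval_cases i
        · rfl
        · exfalso
          have : ([(1:ℤ),-1])[1+1]? = none := rfl
          rw [this] at h2
          exact absurd h2 (by simp)
      · rintro rfl
        exact ⟨by omega, rfl, rfl, rfl⟩
    rw [he, Finset.card_singleton]
  · rw [if_neg hk]
    have he : (Finset.range ([(1:ℤ),-1]).length).filter
        (fun i => ([(1:ℤ),-1])[i]? = some 1 ∧ ([(1:ℤ),-1])[i+1]? = some (-1) ∧
          psum [1,-1] (i+1) = k) = ∅ := by
      ext i
      simp only [Finset.mem_filter, Finset.mem_range, Finset.notMem_empty, iff_false,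
        List.length_cons, List.length_nil]
      rintro ⟨hi, h1, h2, h3⟩
      interval_cases i
      · exact hk (((show psum [(1:ℤ),-1] 1 = 1 from rfl) ▸ h3).symm)
      · have : ([(1:ℤ),-1])[1+1]? = none := rfl
        rw [this] at h2
        exact absurd h2 (by simp)
    rw [he, Finset.card_empty]

lemma psum_u_shift (w : List ℤ) (i : ℕ) : psum ([1,-1] ++ w) (2+i) = psum w i := by
  have := psum_append_right [1,-1] w i
  simpa [pair_sum] using this

lemma psum_u_one (w : List ℤ) : psum ([1,-1] ++ w) 1 = 1 := by
  rw [psum_append_left w (by norm_num)]; rfl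

lemma psum_u_two (w : List ℤ) : psum ([1,-1] ++ w) 2 = 0 := by
  rw [psum_append_left w (by norm_num)]; rfl

lemma dyck_u {w : List ℤ} (hw : IsDyckPath w) : IsDyckPath ([1,-1] ++ w) := by
  obtain ⟨hstep, hnn, hsum⟩ := hw
  refine ⟨?_, ?_, ?_⟩
  · intro s hs
    rcases List.mem_append.1 hs with h | h
    · simp only [List.mem_cons, List.mem_singleton] at h
      rcases h with rfl | h
      · left; rfl
      · simp at h; right; rw [h]
    · exact hstep s h
  · intro i
    match i with
    | 0 => rw [psum_zero]
    | 1 => rw [psum_u_one]; norm_num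
    | (j+2) =>
      rw [show j + 2 = 2 + j by omega, psum_u_shift]
      exact hnn j
  · rw [List.sum_append, pair_sum, hsum, add_zero]

lemma reached_u {w : List ℤ} {k : ℤ} (hk : 1 ≤ k) (hne : w.length ≠ 0)
    (hw : IsDyckPath w) (h : ∃ i, psum ([1,-1] ++ w) i = k) : ∃ i, psum w i = k := by
  obtain ⟨i, hi⟩ := h
  match i with
  | 0 => rw [psum_zero] at hi; omega
  | 1 =>
    rw [psum_u_one] at hi
    exact ⟨1, by rw [psum_one_eq_one hw hne (dyck_first hw hne), hi]⟩
  | (j+2) =>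
    rw [show j + 2 = 2 + j by omega, psum_u_shift] at hi
    exact ⟨j, hi⟩

lemma peaksAt_u {w : List ℤ} (hhead : w.head? ≠ some (-1)) (k : ℤ) :
    peaksAt ([1,-1] ++ w) k = (if k = 1 then 1 else 0) + peaksAt w k := by
  rw [peaksAt_append [1,-1] w k hhead, peaksAt_pair, pair_sum, sub_zero]

lemma valid_head {n r : ℕ} {w : List ℤ} (hw : ValidW n r w) (hn1 : 1 ≤ n) :
    w[0]? = some 1 :=
  dyck_first hw.1 (by rw [hw.2.1]; omega)

lemma valid_head' {n r : ℕ} {w : List ℤ} (hw : ValidW n r w) (hn1 : 1 ≤ n) :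
    w.head? ≠ some (-1) := by
  rw [List.head?_eq_getElem?, valid_head hw hn1]
  intro h
  exact absurd (Option.some.inj h) (by norm_num)

lemma valid_u {n r : ℕ} (hrn : r < n) {w : List ℤ} (hw : ValidW n r w) :
    IsDyckPath ([1,-1] ++ w) ∧ ([1,-1] ++ w).length = 2*n+2 ∧
    peaksAt ([1,-1] ++ w) 1 = r + 1 ∧ peaksAt ([1,-1] ++ w) 2 = r := by
  have hn1 : 1 ≤ n := by omega
  obtain ⟨hd, hlen, hpk⟩ := hw
  have hne : w.length ≠ 0 := by omega
  have hp1 : peaksAt w 1 = r :=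
    hpk 1 le_rfl ⟨1, psum_one_eq_one hd hne (valid_head ⟨hd, hlen, hpk⟩ hn1)⟩
  have hp2 : peaksAt w 2 = r :=
    hpk 2 (by norm_num)
      (reached_two hd hlen (valid_head ⟨hd, hlen, hpk⟩ hn1) hpk hrn)
  refine ⟨dyck_u hd, ?_, ?_, ?_⟩
  · rw [List.length_append, hlen]; simp; omega
  · rw [peaksAt_u (valid_head' ⟨hd, hlen, hpk⟩ hn1), if_pos rfl, hp1]; omega
  · rw [peaksAt_u (valid_head' ⟨hd, hlen, hpk⟩ hn1), if_neg (by norm_num), hp2, zero_add]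

lemma list_eq_cons2 {l : List ℤ} {x y : ℤ} (h0 : l[0]? = some x) (h1 : l[1]? = some y) :
    l = [x, y] ++ l.drop 2 := by
  match l with
  | [] => exact absurd h0 (by simp)
  | [a] => exact absurd h1 (by simp)
  | a :: b :: rest =>
    have hx : a = x := by simpa using h0
    have hy : b = y := by simpa using h1
    simp [hx, hy]

lemma rotate_ground {n r : ℕ} (hrn : r < n) {w : List ℤ} (hw : ValidW n r w) {t : ℕ}
    (ht : t < 2*n+2) (h0 : psum ([1,-1] ++ w) t = 0) (h1 : ([1,-1] ++ w)[t]? = some 1)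
    (h2 : ([1,-1] ++ w)[t+1]? = some (-1)) :
    ValidW n r ((([1,-1] ++ w).rotate t).drop 2) ∧
      ([1,-1] ++ w).rotate t = [1,-1] ++ (([1,-1] ++ w).rotate t).drop 2 := by
  have hn1 : 1 ≤ n := by omega
  obtain ⟨hud, hulen, hup1, hup2⟩ := valid_u hrn hw
  set u := [1,-1] ++ w with hu
  set L := 2*n+2 with hLdef
  have ht1L : t + 1 < L := by
    by_contra hc
    rw [List.getElem?_eq_none (by omega)] at h2
    exact absurd h2 (by simp)
  set a := u.take t with ha
  set b := u.drop t with hb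
  have hta : a.length = t := by rw [ha, List.length_take]; omega
  have htb : b.length = L - t := by rw [hb, List.length_drop, hulen]
  have hab : a ++ b = u := List.take_append_drop t u
  have hrot : u.rotate t = b ++ a := List.rotate_eq_drop_append_take (by omega)
  rw [hrot]
  have hasum : a.sum = 0 := by rw [ha]; exact h0
  have habsum : a.sum + b.sum = 0 := by rw [← List.sum_append, hab, hud.2.2]
  have hbsum : b.sum = 0 := by linarith
  have hps1 : ∀ j, j ≤ L - t → psum (b ++ a) j = psum u (t + j) := by
    intro j hj
    rw [psum_append_left a (by omega)]
    have e := psum_append_right a b j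
    rw [hab, hta, hasum, zero_add] at e
    rw [e]
  have hps2 : ∀ j, j ≤ t → psum (b ++ a) ((L - t) + j) = psum u j := by
    intro j hj
    have e := psum_append_right b a j
    rw [htb, hbsum, zero_add] at e
    rw [e]
    have e2 := psum_append_left (x := a) b (j := j) (by omega)
    rw [hab] at e2
    rw [e2]
  have hrot_nn : ∀ j, 0 ≤ psum (b ++ a) j := by
    intro j
    rcases le_or_gt j (L - t) with hj | hj
    · rw [hps1 j hj]; exact hud.2.1 _
    · rcases le_or_gt j L with hjL | hjL
      · obtain ⟨j', rfl⟩ : ∃ j', j = (L - t) + j' := ⟨j - (L - t), by omega⟩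
        rw [hps2 j' (by omega)]
        exact hud.2.1 _
      · rw [psum_of_length_le (by rw [List.length_append, hta, htb]; omega),
          List.sum_append]
        linarith
  have hrotd : IsDyckPath (b ++ a) := by
    refine ⟨?_, hrot_nn, ?_⟩
    · intro s hs
      apply hud.1
      rw [← hab]
      simp only [List.mem_append] at hs ⊢
      tauto
    · rw [List.sum_append]; linarith
  have hb0 : b[0]? = some 1 := by
    rw [hb, List.getElem?_drop]
    simpa using h1
  have hb1 : b[1]? = some (-1) := by
    rw [hb, List.getElem?_drop]
    exact h2
  have hrot0 : (b ++ a)[0]? = some 1 := by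
    rw [List.getElem?_append_left (by omega)]; exact hb0
  have hrot1 : (b ++ a)[1]? = some (-1) := by
    rw [List.getElem?_append_left (by omega)]; exact hb1
  have hsplit2 : b ++ a = [1,-1] ++ (b ++ a).drop 2 := list_eq_cons2 hrot0 hrot1
  set w' := (b ++ a).drop 2 with hw'def
  have hrotlen : (b ++ a).length = L := by rw [List.length_append, hta, htb]; omega
  have hw'len : w'.length = 2*n := by rw [hw'def, List.length_drop, hrotlen]; omega
  have hw'd : IsDyckPath w' := by
    refine ⟨?_, ?_, ?_⟩
    · intro s hs
      exact hrotd.1 s (List.drop_subset 2 (b ++ a) hs)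
    · intro i
      have e : psum ([1,-1] ++ w') (2+i) = psum w' i := psum_u_shift w' i
      rw [← hsplit2] at e
      rw [← e]
      exact hrot_nn _
    · have e3 : (b ++ a).sum = ([1,-1] ++ w').sum := by rw [← hsplit2]
      rw [List.sum_append, List.sum_append, pair_sum, zero_add] at e3
      linarith
  have hbhead : b.head? ≠ some (-1) := by
    rw [List.head?_eq_getElem?, hb0]
    intro hcc
    exact absurd (Option.some.inj hcc) (by norm_num)
  have hahead : a.head? ≠ some (-1) := by
    rcases Nat.eq_zero_or_pos t with rfl | htpos
    · rw [ha]
      simp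
    · rw [List.head?_eq_getElem?, ha, List.getElem?_take, if_pos htpos]
      have e4 : u[0]? = some 1 := rfl
      rw [e4]
      intro hcc
      exact absurd (Option.some.inj hcc) (by norm_num)
  have hpk_rot : ∀ k : ℤ, peaksAt (b ++ a) k = peaksAt u k := by
    intro k
    have e1 : peaksAt u k = peaksAt a k + peaksAt b k := by
      conv_lhs => rw [← hab]
      rw [peaksAt_append a b k hbhead, hasum, sub_zero]
    have e2 : peaksAt (b ++ a) k = peaksAt b k + peaksAt a k := by
      rw [peaksAt_append b a k hahead, hbsum, sub_zero]
    omega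
  have hw'head : w'.head? ≠ some (-1) := by
    rw [List.head?_eq_getElem?, dyck_first hw'd (by omega)]
    intro hcc
    exact absurd (Option.some.inj hcc) (by norm_num)
  refine ⟨⟨hw'd, hw'len, ?_⟩, hsplit2⟩
  intro k hk hreach
  -- peaksAt w' k = peaksAt w k
  have echain : (if k = 1 then 1 else 0) + peaksAt w' k
      = (if k = 1 then 1 else 0) + peaksAt w k := by
    rw [← peaksAt_u hw'head k, ← peaksAt_u (valid_head' hw hn1) k, ← hsplit2, hpk_rot]
  have epk : peaksAt w' k = peaksAt w k := by omega
  rw [epk]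
  apply hw.2.2 k hk
  -- k reached by w' → reached by w
  obtain ⟨i, hi⟩ := hreach
  have hiu' : psum ([1,-1] ++ w') (2+i) = k := by rw [psum_u_shift]; exact hi
  rw [← hsplit2] at hiu'
  -- psum (b++a) (2+i) = k → reached by u
  have hreach_u : ∃ i', psum u i' = k := by
    rcases le_or_gt (2+i) (L - t) with hj | hj
    · exact ⟨t + (2+i), by rw [← hps1 _ hj]; exact hiu'⟩
    · rcases le_or_gt (2+i) L with hjL | hjL
      · refine ⟨(2+i) - (L - t), ?_⟩
        rw [← hps2 _ (by omega)]
        rw [show L - t + ((2+i) - (L - t)) = 2 + i by omega]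
        exact hiu'
      · exfalso
        rw [psum_of_length_le (by omega : (b++a).length ≤ 2+i), List.sum_append] at hiu'
        rw [hasum, hbsum] at hiu'
        omega
  exact reached_u hk (by rw [hw.2.1]; omega) hw.1 hreach_u

lemma ground_of_rotate {n r : ℕ} (hrn : r < n) {w w' : List ℤ} (hw : ValidW n r w)
    (hw' : ValidW n r w') {t : ℕ} (ht : t < 2*n+2)
    (heq : ([1,-1] ++ w).rotate t = [1,-1] ++ w') :
    psum ([1,-1] ++ w) t = 0 ∧ ([1,-1] ++ w)[t]? = some 1 ∧
      ([1,-1] ++ w)[t+1]? = some (-1) := by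
  have hn1 : 1 ≤ n := by omega
  obtain ⟨hud, hulen, -, -⟩ := valid_u hrn hw
  set u := [1,-1] ++ w with hu
  set L := 2*n+2 with hLdef
  set a := u.take t with ha
  set b := u.drop t with hb
  have hta : a.length = t := by rw [ha, List.length_take]; omega
  have htb : b.length = L - t := by rw [hb, List.length_drop, hulen]
  have hab : a ++ b = u := List.take_append_drop t u
  have hrot : u.rotate t = b ++ a := List.rotate_eq_drop_append_take (by omega)
  rw [hrot] at heq
  have hud' : IsDyckPath ([1,-1] ++ w') := dyck_u hw'.1
  have hba_d : IsDyckPath (b ++ a) := by rw [heq]; exact hud'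
  have hbt : b[0]? = u[t]? := by rw [hb, List.getElem?_drop]; congr 1
  have h1 : u[t]? = some 1 := by
    rw [← hbt]
    have e : (b ++ a)[0]? = b[0]? := List.getElem?_append_left (by omega)
    rw [heq] at e
    exact e.symm
  have habsum : a.sum + b.sum = 0 := by rw [← List.sum_append, hab, hud.2.2]
  have h0 : psum u t = 0 := by
    have g1 : 0 ≤ psum u t := hud.2.1 t
    have hasum : a.sum = psum u t := by rw [ha]; rfl
    have e : psum (b ++ a) (L - t) = b.sum := by
      rw [psum_append_left a (by omega), ← psum_length b, htb]
    have g2 : 0 ≤ psum (b ++ a) (L - t) := hba_d.2.1 _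
    rw [e] at g2
    linarith
  refine ⟨h0, h1, ?_⟩
  rcases Nat.lt_or_ge (t+1) L with hlt | hge
  · have e : (b ++ a)[1]? = b[1]? := List.getElem?_append_left (by omega)
    rw [heq] at e
    have e2 : b[1]? = u[t+1]? := by rw [hb, List.getElem?_drop]
    rw [e2] at e
    have e3 : ([1,-1] ++ w')[1]? = some (-1) := by simp
    rw [e3] at e
    exact e.symm
  · exfalso
    have htL : t = L - 1 := by omega
    have htpos : 0 < t := by omega
    have e : (b ++ a)[1]? = a[1 - b.length]? := by
      apply List.getElem?_append_right
      omega
    rw [heq] at e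
    have e2 : a[1 - b.length]? = a[0]? := by rw [htb]; congr 1; omega
    rw [e2, ha, List.getElem?_take, if_pos htpos] at e
    have e4 : u[0]? = some 1 := rfl
    rw [e4] at e
    have e3 : ([1,-1] ++ w')[1]? = some (-1) := by simp
    rw [e3] at e
    exact absurd (Option.some.inj e) (by norm_num)

lemma GT_card {n r : ℕ} (hrn : r < n) {w : List ℤ} (hw : ValidW n r w) :
    ((Finset.range (2*n+2)).filter (fun t => psum ([1,-1] ++ w) t = 0 ∧
      ([1,-1] ++ w)[t]? = some 1 ∧ ([1,-1] ++ w)[t+1]? = some (-1))).card = r + 1 := by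
  classical
  obtain ⟨hud, hulen, hup1, hup2⟩ := valid_u hrn hw
  rw [← hup1]
  unfold peaksAt
  rw [hulen]
  apply congrArg
  apply Finset.filter_congr
  intro i hi
  simp only [Finset.mem_range] at hi
  constructor
  · rintro ⟨h0, h1, h2⟩
    refine ⟨h1, h2, ?_⟩
    rw [psum_succ' h1, h0, zero_add]
  · rintro ⟨h1, h2, h3⟩
    refine ⟨?_, h1, h2⟩
    have e := psum_succ' h1
    rw [h3] at e
    linarith


lemma finite_step : ∀ m : ℕ, {w : List ℤ | w.length = m ∧ IsStepWord w}.Finite := by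
  intro m
  induction m with
  | zero =>
    apply Set.Finite.subset (Set.finite_singleton ([] : List ℤ))
    rintro w ⟨hl, -⟩
    simp [List.length_eq_zero_iff.mp hl]
  | succ m ih =>
    apply Set.Finite.subset (Set.Finite.image (fun p : ℤ × List ℤ => p.1 :: p.2)
      (Set.Finite.prod ((Set.finite_singleton (-1 : ℤ)).insert 1) ih))
    rintro w ⟨hl, hs⟩
    match w with
    | a :: tl =>
      refine ⟨(a, tl), ⟨?_, ?_, ?_⟩, rfl⟩
      · rcases hs a (by simp) with h | h <;> simp [h]
      · simpa using hl
      · intro s hs'; exact hs s (by simp [hs'])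

lemma finite_valid (n r : ℕ) : {w : List ℤ | ValidW n r w}.Finite := by
  apply Set.Finite.subset (finite_step (2*n))
  rintro w ⟨hd, hl, -⟩
  exact ⟨hl, hd.1⟩

theorem Dr_divisible (r n : ℕ) (hr : 1 ≤ r) (hn : r < n) :
    (r + 1) ∣ Nat.card {w : List ℤ //
        IsDyckPath w ∧ w.length = 2 * n ∧
          ∀ k : ℤ, 1 ≤ k → (∃ i, psum w i = k) → peaksAt w k = r} := by
  classical
  have hfin : {w : List ℤ | ValidW n r w}.Finite := finite_valid n r
  have hcard : Nat.card {w : List ℤ //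
      IsDyckPath w ∧ w.length = 2 * n ∧
        ∀ k : ℤ, 1 ≤ k → (∃ i, psum w i = k) → peaksAt w k = r}
      = hfin.toFinset.card := by
    have e1 : Nat.card {w : List ℤ //
        IsDyckPath w ∧ w.length = 2 * n ∧
          ∀ k : ℤ, 1 ≤ k → (∃ i, psum w i = k) → peaksAt w k = r}
        = Nat.card {w : List ℤ | ValidW n r w} :=
      Nat.card_congr (Equiv.subtypeEquivRight (fun w => Iff.rfl))
    rw [e1, Nat.card_coe_set_eq, Set.ncard_eq_toFinset_card _ hfin]
  rw [hcard]
  set F := hfin.toFinset with hF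
  have hmemF : ∀ w, w ∈ F ↔ ValidW n r w := by
    intro w; rw [hF, Set.Finite.mem_toFinset]; exact Iff.rfl
  set Rel : List ℤ → List ℤ → Prop :=
    fun w w' => ∃ t, ([1,-1] ++ w).rotate t = [1,-1] ++ w' with hRel
  have hrefl : ∀ w, Rel w w := fun w => ⟨0, by rw [List.rotate_zero]⟩
  have hsymm : ∀ w w', Rel w w' → Rel w' w := by
    rintro w w' ⟨t, ht⟩
    have hlen' : ([1,-1] ++ w').length = ([1,-1] ++ w).length := by
      rw [← ht, List.length_rotate]
    have hzpos : 0 < ([1,-1] ++ w).length := by simp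
    refine ⟨([1,-1] ++ w).length - t % ([1,-1] ++ w).length, ?_⟩
    rw [← ht, List.rotate_rotate]
    have h1 : t % ([1,-1] ++ w).length < ([1,-1] ++ w).length := Nat.mod_lt _ hzpos
    have h3 : t + (([1,-1] ++ w).length - t % ([1,-1] ++ w).length)
        = ([1,-1] ++ w).length * (t / ([1,-1] ++ w).length + 1) := by
      have h4 := Nat.div_add_mod t ([1,-1] ++ w).length
      have hmul : ([1,-1] ++ w).length * (t / ([1,-1] ++ w).length + 1)
          = ([1,-1] ++ w).length * (t / ([1,-1] ++ w).length) + ([1,-1] ++ w).length := by ring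
      omega
    rw [h3, ← List.rotate_mod, Nat.mul_mod_right, List.rotate_zero]
  have htrans : ∀ w w' w'', Rel w w' → Rel w' w'' → Rel w w'' := by
    rintro w w' w'' ⟨t, ht⟩ ⟨s, hs⟩
    exact ⟨t + s, by rw [← List.rotate_rotate, ht, hs]⟩
  have hclscard : ∀ w ∈ F, (F.filter (Rel w)).card = r + 1 := by
    intro w hwF
    have hw : ValidW n r w := (hmemF w).1 hwF
    obtain ⟨hud, hulen, hup1, hup2⟩ := valid_u hn hw
    have hkey : ∀ t1 t2 : ℕ, t1 < t2 → t2 < 2*n+2 →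
        ([1,-1] ++ w).rotate t1 = ([1,-1] ++ w).rotate t2 → False := by
      intro t1 t2 hlt htL hre
      have hd : ([1,-1] ++ w).rotate (t1 + (2*n+2 - t2)) = [1,-1] ++ w := by
        rw [← List.rotate_rotate, hre, List.rotate_rotate,
          show t2 + (2*n+2 - t2) = 2*n+2 by omega, ← hulen, List.rotate_length]
      exact no_period hud (by omega) (by rw [hulen]; omega) hd hup1 hup2
    rw [← GT_card hn hw]
    symm
    apply Finset.card_bij (fun t _ => (([1,-1] ++ w).rotate t).drop 2)
    · intro t ht
      simp only [Finset.mem_filter, Finset.mem_range] at ht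
      obtain ⟨htL, h0, h1, h2⟩ := ht
      obtain ⟨hval, heq⟩ := rotate_ground hn hw htL h0 h1 h2
      exact Finset.mem_filter.2 ⟨(hmemF _).2 hval, ⟨t, heq⟩⟩
    · intro t1 ht1 t2 ht2 hdrop
      simp only [Finset.mem_filter, Finset.mem_range] at ht1 ht2
      obtain ⟨ht1L, h01, h11, h21⟩ := ht1
      obtain ⟨ht2L, h02, h12, h22⟩ := ht2
      obtain ⟨-, heq1⟩ := rotate_ground hn hw ht1L h01 h11 h21
      obtain ⟨-, heq2⟩ := rotate_ground hn hw ht2L h02 h12 h22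
      have hrr : ([1,-1] ++ w).rotate t1 = ([1,-1] ++ w).rotate t2 := by
        rw [heq1, heq2, hdrop]
      by_contra hne
      rcases Nat.lt_or_ge t1 t2 with hlt | hge
      · exact hkey t1 t2 hlt ht2L hrr
      · exact hkey t2 t1 (by omega) ht1L hrr.symm
    · intro w' hw'
      rw [Finset.mem_filter] at hw'
      obtain ⟨hw'F, t0, ht0⟩ := hw'
      have hw'v : ValidW n r w' := (hmemF w').1 hw'F
      have hrt : ([1,-1] ++ w).rotate (t0 % (2*n+2)) = [1,-1] ++ w' := by
        rw [show 2*n+2 = ([1,-1] ++ w).length from hulen.symm, List.rotate_mod]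
        exact ht0
      have htL : t0 % (2*n+2) < 2*n+2 := Nat.mod_lt _ (by omega)
      obtain ⟨g0, g1, g2⟩ := ground_of_rotate hn hw hw'v htL hrt
      refine ⟨t0 % (2*n+2), Finset.mem_filter.2 ⟨Finset.mem_range.2 htL, g0, g1, g2⟩, ?_⟩
      rw [hrt]
      simp
  set f : List ℤ → Finset (List ℤ) := fun w => F.filter (Rel w) with hf
  have h1 : F.card = ∑ c ∈ F.image f, (F.filter (fun w' => f w' = c)).card :=
    Finset.card_eq_sum_card_fiberwise (fun x hx => Finset.mem_image_of_mem f hx)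
  have h2 : ∀ c ∈ F.image f, (F.filter (fun w' => f w' = c)).card = r + 1 := by
    intro c hc
    obtain ⟨w₀, hw₀F, rfl⟩ := Finset.mem_image.1 hc
    have hfe : F.filter (fun w' => f w' = f w₀) = f w₀ := by
      ext w'
      simp only [Finset.mem_filter]
      constructor
      · rintro ⟨hw'F, hff⟩
        have hm : w' ∈ f w' := Finset.mem_filter.2 ⟨hw'F, hrefl w'⟩
        rw [hff] at hm
        rw [hf]
        exact hm
      · intro hmem
        rw [hf] at hmem
        rw [Finset.mem_filter] at hmem
        obtain ⟨hw'F, hrel⟩ := hmem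
        refine ⟨hw'F, ?_⟩
        rw [hf]
        ext x
        simp only [Finset.mem_filter, and_congr_right_iff]
        intro hxF
        constructor
        · intro hx; exact htrans _ _ _ hrel hx
        · intro hx; exact htrans _ _ _ (hsymm _ _ hrel) hx
    rw [hfe]
    exact hclscard w₀ hw₀F
  rw [Finset.sum_congr rfl h2, Finset.sum_const, smul_eq_mul] at h1
  exact ⟨(F.image f).card, by rw [h1, mul_comm]⟩
end
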